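/- Let $V = V_1 \oplus \cdots \oplus V_n$ where each $V_i$ is a finite-dimensional representation of a torus $T$, let $v_i \in V_i$ be a $T$-weight vector of weight $\mu_i \in X(T)$, and let $v = v_1 + \cdots + v_n$. Then the orbit $T \cdot v$ is closed in $V$ if and only if $0$ lies in the relative interior of $\operatorname{conv}(\{\mu_1, \ldots, \mu_n\})$ in $X(T) \otimes \mathbb{Q}$. -/

import Mathlib

open Finset
open Filter

/-- Rational solutions of a rational homogeneous linear system are dense in the
real solutions. -/
lemma rat_ker_dense {n : ℕ} : ∀ (m : ℕ) (A : Fin m → Fin n → ℚ) (x : Fin n → ℝ),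
    (∀ k, ∑ i, (A k i : ℝ) * x i = 0) → ∀ ε : ℝ, 0 < ε → ∃ q : Fin n → ℚ,
    (∀ k, ∑ i, A k i * q i = 0) ∧ dist (fun i => (q i : ℝ)) x < ε := by
  intro m
  induction m with
  | zero =>
    intro A x _ ε hε
    have h : ∀ i : Fin n, ∃ q : ℚ, |(q : ℝ) - x i| < ε := fun i => by
      obtain ⟨q, hq⟩ := exists_rat_near (x i) hε
      exact ⟨q, by rwa [abs_sub_comm] at hq⟩
    choose q hq using h
    refine ⟨q, fun k => k.elim0, ?_⟩
    rcases Nat.eq_zero_or_pos n with hn | _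
    · subst hn
      have : (fun i : Fin 0 => (q i : ℝ)) = x := funext fun i => i.elim0
      simpa [this] using hε
    · rw [dist_pi_lt_iff hε]
      intro i
      simpa [Real.dist_eq] using hq i
  | succ m IH =>
    intro A x hx ε hε
    by_cases h0 : A 0 = 0
    · obtain ⟨q, hq1, hq2⟩ := IH (fun k => A k.succ) x (fun k => hx k.succ) ε hε
      refine ⟨q, fun k => ?_, hq2⟩
      induction k using Fin.cases with
      | zero => simp [h0]
      | succ k => exact hq1 k
    · obtain ⟨p, hp⟩ : ∃ p, A 0 p ≠ 0 := by
        by_contra h; push_neg at h; exact h0 (funext h)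
      have hp' : (A 0 p : ℝ) ≠ 0 := by exact_mod_cast hp
      -- the rational projection onto the kernel of the first functional
      set Pq : (Fin n → ℚ) → Fin n → ℚ :=
        fun y i => y i - (∑ l, A 0 l * y l) / A 0 p * (if i = p then 1 else 0) with hPq
      set Pr : (Fin n → ℝ) → Fin n → ℝ :=
        fun y i => y i - (∑ l, (A 0 l : ℝ) * y l) / (A 0 p : ℝ) * (if i = p then 1 else 0) with hPr
      have hcast : ∀ q : Fin n → ℚ, (fun i => ((Pq q i : ℚ) : ℝ)) = Pr (fun i => (q i : ℝ)) := by
        intro q; funext i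
        by_cases hip : i = p <;> simp [hPq, hPr, hip] <;> push_cast <;> ring
      set B : Fin m → Fin n → ℚ := fun k i => A k.succ i - A k.succ p * A 0 i / A 0 p with hB
      -- key algebraic identities
      have hkeyq : ∀ (k : Fin m) (y : Fin n → ℚ),
          ∑ i, A k.succ i * Pq y i = ∑ i, B k i * y i := by
        intro k y
        have e1 : ∑ i, A k.succ i * Pq y i
            = (∑ i, A k.succ i * y i) - (∑ l, A 0 l * y l) / A 0 p * A k.succ p := by
          simp only [hPq, mul_sub, Finset.sum_sub_distrib, mul_ite, mul_one, mul_zero]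
          rw [Finset.sum_ite_eq' Finset.univ p
            (fun i => A k.succ i * ((∑ l, A 0 l * y l) / A 0 p))]
          simp [mul_comm]
        have e2 : ∑ i, B k i * y i
            = (∑ i, A k.succ i * y i) - (∑ l, A 0 l * y l) / A 0 p * A k.succ p := by
          simp only [hB, sub_mul, Finset.sum_sub_distrib]
          have h1 : ∀ i, A k.succ p * A 0 i / A 0 p * y i
              = A k.succ p / A 0 p * (A 0 i * y i) := fun i => by ring
          simp only [h1, ← Finset.mul_sum]
          ring
        rw [e1, e2]
      have hkeyr : ∀ (k : Fin m) (y : Fin n → ℝ),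
          ∑ i, (A k.succ i : ℝ) * Pr y i = ∑ i, (B k i : ℝ) * y i := by
        intro k y
        have e1 : ∑ i, (A k.succ i : ℝ) * Pr y i
            = (∑ i, (A k.succ i : ℝ) * y i)
              - (∑ l, (A 0 l : ℝ) * y l) / (A 0 p : ℝ) * (A k.succ p : ℝ) := by
          simp only [hPr, mul_sub, Finset.sum_sub_distrib, mul_ite, mul_one, mul_zero]
          rw [Finset.sum_ite_eq' Finset.univ p
            (fun i => (A k.succ i : ℝ) * ((∑ l, (A 0 l : ℝ) * y l) / (A 0 p : ℝ)))]
          simp [mul_comm]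
        have e2 : ∑ i, (B k i : ℝ) * y i
            = (∑ i, (A k.succ i : ℝ) * y i)
              - (∑ l, (A 0 l : ℝ) * y l) / (A 0 p : ℝ) * (A k.succ p : ℝ) := by
          simp only [hB]
          push_cast
          simp only [sub_mul, Finset.sum_sub_distrib]
          have h1 : ∀ i, (A k.succ p : ℝ) * (A 0 i : ℝ) / (A 0 p : ℝ) * y i
              = (A k.succ p : ℝ) / (A 0 p : ℝ) * ((A 0 i : ℝ) * y i) := fun i => by ring
          simp only [h1, ← Finset.mul_sum]
          ring
        rw [e1, e2]
      -- `x` is fixed by the projection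
      have hx0 : ∑ l, (A 0 l : ℝ) * x l = 0 := hx 0
      have hfix : Pr x = x := by
        funext i; simp [hPr, hx0]
      -- continuity of the real projection at `x`
      have hcont : Continuous Pr := by
        rw [hPr]
        exact continuous_pi fun i => ((continuous_apply i).sub
          ((((continuous_finset_sum _ fun l _ =>
            (continuous_const.mul (continuous_apply l))).div_const _)).mul continuous_const))
      obtain ⟨δ, hδpos, hδ⟩ := Metric.continuousAt_iff.mp hcont.continuousAt (ε := ε) hε
      have hxB : ∀ k, ∑ i, (B k i : ℝ) * x i = 0 := by
        intro k
        rw [← hkeyr k x, hfix]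
        exact hx k.succ
      obtain ⟨q, hq1, hq2⟩ := IH B x hxB δ hδpos
      refine ⟨Pq q, fun k => ?_, ?_⟩
      · induction k using Fin.cases with
        | zero =>
          simp only [hPq, mul_sub, Finset.sum_sub_distrib, mul_ite, mul_one, mul_zero]
          rw [Finset.sum_ite_eq' Finset.univ p
            (fun i => A 0 i * ((∑ l, A 0 l * q l) / A 0 p))]
          simp [mul_comm, div_mul_cancel₀, hp]
          field_simp
          ring
        | succ k => rw [hkeyq k q]; exact hq1 k
      · rw [hcast q, ← hfix]
        exact hδ hq2


lemma stiemke_aux {r n : ℕ} (hn : 0 < n) (μ : Fin n → Fin r → ℤ)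
    (h : ¬ ∃ c : Fin n → ℚ, (∀ i, 0 < c i) ∧ ∑ i, c i = 1 ∧
      ∀ j, ∑ i, c i * (μ i j : ℚ) = 0) :
    ∃ a : Fin r → ℝ, (∀ i, 0 ≤ ∑ j, (μ i j : ℝ) * a j) ∧
      ∃ i, 0 < ∑ j, (μ i j : ℝ) * a j := by
  by_contra h2
  push_neg at h2
  have h3 : ∀ a : Fin r → ℝ, (∀ i, 0 ≤ ∑ j, (μ i j : ℝ) * a j) →
      ∀ i, ∑ j, (μ i j : ℝ) * a j = 0 := fun a ha i =>
    le_antisymm (h2 a ha i) (ha i)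
  -- the column space as a submodule
  set T : (Fin r → ℝ) →ₗ[ℝ] (Fin n → ℝ) :=
    { toFun := fun a i => ∑ j, (μ i j : ℝ) * a j
      map_add' := by
        intro a b; funext i; simp [mul_add, Finset.sum_add_distrib]
      map_smul' := by
        intro c a; funext i; simp [Finset.mul_sum]; congr 1; funext j; ring } with hT
  have hTa : ∀ (a : Fin r → ℝ) (i : Fin n), T a i = ∑ j, (μ i j : ℝ) * a j := fun a i => rfl
  set U : Submodule ℝ (Fin n → ℝ) := LinearMap.range T with hU
  have hUclosed : IsClosed (U : Set (Fin n → ℝ)) := Submodule.closed_of_finiteDimensional U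
  have hdisj : Disjoint (U : Set (Fin n → ℝ)) (stdSimplex ℝ (Fin n)) := by
    rw [Set.disjoint_left]
    rintro x ⟨a, rfl⟩ ⟨hpos, hsum⟩
    have hz := h3 a (fun i => by rw [← hTa]; exact hpos i)
    rw [Finset.sum_congr rfl (fun i _ => (hTa a i).trans (hz i))] at hsum
    simpa using hsum
  obtain ⟨f, u, w, hfu, huw, hfw⟩ := geometric_hahn_banach_closed_compact
    (U.convex) hUclosed (convex_stdSimplex ℝ (Fin n))
    (isCompact_stdSimplex ℝ (Fin n)) hdisj
  -- f vanishes on U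
  have hfU : ∀ x ∈ U, f x = 0 := by
    intro x hx
    by_contra hfx
    have hcx : ∀ c : ℝ, f (c • x) < u := fun c => hfu _ (U.smul_mem c hx)
    have := hcx ((u + |u| + 1) / f x)
    rw [map_smul, smul_eq_mul, div_mul_cancel₀ _ hfx] at this
    have : u + |u| + 1 < u := this
    nlinarith [abs_nonneg u]
  have hu0 : 0 < u := by simpa using hfu 0 U.zero_mem
  -- the coordinates of the separating functional
  set e : Fin n → (Fin n → ℝ) := fun i k => if i = k then 1 else 0 with he
  have hestd : ∀ i, e i ∈ stdSimplex ℝ (Fin n) := by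
    intro i
    constructor
    · intro k; by_cases hik : i = k <;> simp [he, hik]
    · simp [he]
  set c' : Fin n → ℝ := fun i => f (e i) with hc'
  have hc'pos : ∀ i, 0 < c' i := fun i => lt_trans hu0 (lt_trans huw (hfw _ (hestd i)))
  have hfx : ∀ x : Fin n → ℝ, f x = ∑ i, x i * c' i := by
    intro x
    conv_lhs => rw [pi_eq_sum_univ x]
    rw [map_sum]
    exact Finset.sum_congr rfl fun i _ => by rw [map_smul, smul_eq_mul, hc']
  -- the columns lie in U, whence the orthogonality relations
  have hcol : ∀ j : Fin r, ∑ i, (μ i j : ℝ) * c' i = 0 := by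
    intro j
    have hmem : (fun i => (μ i j : ℝ)) ∈ U := by
      refine ⟨fun k => if j = k then 1 else 0, ?_⟩
      funext i
      rw [hTa]
      simp [mul_ite, Finset.sum_ite_eq]
    have := hfU _ hmem
    rw [hfx] at this
    exact this
  -- rationalize using density
  obtain ⟨ε, hεpos, hεle⟩ : ∃ ε : ℝ, 0 < ε ∧ ∀ i, ε ≤ c' i := by
    obtain ⟨i0, hi0⟩ := Finset.exists_min_image Finset.univ c' ⟨⟨0, hn⟩, Finset.mem_univ _⟩
    exact ⟨c' i0, hc'pos i0, fun i => hi0.2 i (Finset.mem_univ i)⟩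
  obtain ⟨q, hq1, hq2⟩ := rat_ker_dense r (fun j i => ((μ i j : ℚ))) c'
    (fun j => by push_cast; exact hcol j) ε hεpos
  have hqpos : ∀ i, 0 < q i := by
    intro i
    have hd : dist ((q i : ℝ)) (c' i) < ε := lt_of_le_of_lt (dist_le_pi_dist (fun i => ((q i : ℝ))) c' i) hq2
    rw [Real.dist_eq, abs_lt] at hd
    have : (0 : ℝ) < (q i : ℝ) := by linarith [hεle i]
    exact_mod_cast this
  -- normalize
  set s : ℚ := ∑ i, q i with hs
  have hspos : 0 < s := Finset.sum_pos (fun i _ => hqpos i) ⟨⟨0, hn⟩, Finset.mem_univ _⟩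
  refine h ⟨fun i => q i / s, fun i => div_pos (hqpos i) hspos, ?_, ?_⟩
  · rw [← Finset.sum_div, ← hs, div_self hspos.ne']
  · intro j
    have : ∑ i, q i / s * (μ i j : ℚ) = (∑ i, (μ i j : ℚ) * q i) / s := by
      rw [Finset.sum_div]
      exact Finset.sum_congr rfl fun i _ => by ring
    rw [this, hq1 j, zero_div]


lemma nat_weights {r n : ℕ} (μ : Fin n → Fin r → ℤ) (c : Fin n → ℚ)
    (hc : ∀ i, 0 < c i) (hsum : ∀ j, ∑ i, c i * (μ i j : ℚ) = 0) :
    ∃ d : Fin n → ℕ, (∀ i, 0 < d i) ∧ ∀ j, ∑ i, (d i : ℤ) * μ i j = 0 := by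
  classical
  set N : ℕ := ∏ i, (c i).den with hN
  have hNpos : 0 < N := Finset.prod_pos fun i _ => (c i).pos
  have hint : ∀ i, ∃ z : ℤ, (c i) * N = (z : ℚ) := by
    intro i
    obtain ⟨k, hk⟩ := Finset.dvd_prod_of_mem (fun i => (c i).den) (Finset.mem_univ i)
    refine ⟨(c i).num * k, ?_⟩
    rw [← hN] at hk
    rw [hk]
    push_cast
    rw [← mul_assoc, Rat.mul_den_eq_num]
  choose z hz using hint
  have hzpos : ∀ i, 0 < z i := by
    intro i
    have : (0 : ℚ) < (z i : ℚ) := by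
      rw [← hz i]
      exact mul_pos (hc i) (by exact_mod_cast hNpos)
    exact_mod_cast this
  refine ⟨fun i => (z i).toNat, fun i => by simp [Int.lt_toNat, hzpos i], ?_⟩
  intro j
  have : ∑ i, (z i : ℚ) * (μ i j : ℚ) = 0 := by
    have : ∑ i, (z i : ℚ) * (μ i j : ℚ) = (N : ℚ) * ∑ i, c i * (μ i j : ℚ) := by
      rw [Finset.mul_sum]
      exact Finset.sum_congr rfl fun i _ => by rw [← hz i]; ring
    rw [this, hsum j, mul_zero]
  have hz' : ∑ i, z i * μ i j = 0 := by exact_mod_cast this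
  rw [← hz']
  exact Finset.sum_congr rfl fun i _ => by
    rw [Int.toNat_of_nonneg (hzpos i).le]


lemma zpow_sum₀ {ι : Type*} (a : ℂ) (ha : a ≠ 0) (s : Finset ι) (f : ι → ℤ) :
    a ^ (∑ i ∈ s, f i) = ∏ i ∈ s, a ^ f i := by
  classical
  induction s using Finset.induction with
  | empty => simp
  | insert _ _ hx ih =>
    rw [Finset.sum_insert hx, Finset.prod_insert hx, zpow_add₀ ha, ih]

lemma not_closed_of_destab {r n : ℕ} (μ : Fin n → Fin r → ℤ) (v : Fin n → ℂ)
    (hv : ∀ i, v i ≠ 0) (a : Fin r → ℝ)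
    (ha : ∀ i, 0 ≤ ∑ j, (μ i j : ℝ) * a j) (i0 : Fin n)
    (hi0 : 0 < ∑ j, (μ i0 j : ℝ) * a j) :
    ¬ IsClosed {w : Fin n → ℂ |
        ∃ t : Fin r → ℂˣ, ∀ i, w i = (∏ j, (t j : ℂ) ^ μ i j) * v i} := by
  intro hS
  set m : Fin n → ℝ := fun i => ∑ j, (μ i j : ℝ) * a j with hm
  set wlim : Fin n → ℂ := fun i => if m i = 0 then v i else 0 with hwlim
  set t : ℕ → Fin r → ℂˣ := fun k j =>
    Units.mk0 ((Real.exp (-(k : ℝ) * a j) : ℂ)) (by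
      exact_mod_cast Complex.ofReal_ne_zero.mpr (Real.exp_ne_zero _)) with ht
  set W : ℕ → Fin n → ℂ := fun k i => (∏ j, ((t k j : ℂ)) ^ μ i j) * v i with hW
  have hWmem : ∀ k, W k ∈ {w : Fin n → ℂ |
      ∃ t : Fin r → ℂˣ, ∀ i, w i = (∏ j, (t j : ℂ) ^ μ i j) * v i} :=
    fun k => ⟨t k, fun i => rfl⟩
  have hWformula : ∀ k i, W k i = (Real.exp (-(k : ℝ) * m i) : ℂ) * v i := by
    intro k i
    simp only [hW]
    congr 1
    have : ∀ j : Fin r, ((t k j : ℂ)) ^ μ i j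
        = Complex.exp ((μ i j : ℂ) * (-(k : ℝ) * a j)) := by
      intro j
      rw [ht]
      simp only [Units.val_mk0]
      rw [Complex.ofReal_exp, Complex.exp_int_mul]
      norm_cast
    rw [Finset.prod_congr rfl fun j _ => this j, ← Complex.exp_sum,
      Complex.ofReal_exp]
    congr 1
    rw [hm]
    push_cast
    rw [Finset.mul_sum]
    exact Finset.sum_congr rfl fun j _ => by ring
  have htend : Tendsto W atTop (nhds wlim) := by
    rw [tendsto_pi_nhds]
    intro i
    have : (fun k => W k i) = fun k : ℕ => (Real.exp (-(k : ℝ) * m i) : ℂ) * v i := by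
      funext k; exact hWformula k i
    rw [this]
    by_cases hmi : m i = 0
    · simp only [hmi, mul_zero, Real.exp_zero]
      simpa [hwlim, hmi] using tendsto_const_nhds
    · have hmipos : 0 < m i := lt_of_le_of_ne (ha i) (Ne.symm hmi)
      have h1 : Tendsto (fun k : ℕ => (k : ℝ) * m i) atTop atTop :=
        Tendsto.atTop_mul_const hmipos tendsto_natCast_atTop_atTop
      have h2 : Tendsto (fun k : ℕ => Real.exp (-(k : ℝ) * m i)) atTop (nhds 0) := by
        have : (fun k : ℕ => Real.exp (-(k : ℝ) * m i))
            = Real.exp ∘ (fun x => -x) ∘ (fun k : ℕ => (k : ℝ) * m i) := by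
          funext k; simp [neg_mul]
        rw [this]
        exact Real.tendsto_exp_atBot.comp (tendsto_neg_atTop_atBot.comp h1)
      have h3 : Tendsto (fun k : ℕ => ((Real.exp (-(k : ℝ) * m i) : ℝ) : ℂ))
          atTop (nhds 0) := by
        have h4 := (Complex.continuous_ofReal.tendsto 0).comp h2
        simp only [Function.comp_def] at h4
        simpa using h4
      have := h3.mul_const (v i)
      simpa [hwlim, hmi] using this
  have hmem : wlim ∈ {w : Fin n → ℂ |
      ∃ t : Fin r → ℂˣ, ∀ i, w i = (∏ j, (t j : ℂ) ^ μ i j) * v i} :=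
    hS.mem_of_tendsto htend (Filter.Eventually.of_forall hWmem)
  obtain ⟨t', ht'⟩ := hmem
  have h0 : wlim i0 = 0 := by
    rw [hwlim]; simp only [hm] at hi0 ⊢
    rw [if_neg hi0.ne']
  have hne : wlim i0 ≠ 0 := by
    rw [ht' i0]
    exact mul_ne_zero (Finset.prod_ne_zero_iff.mpr fun j _ =>
      zpow_ne_zero _ (Units.ne_zero _)) (hv i0)
  exact hne h0


lemma zpow_sum₀' {ι : Type*} (a : ℂ) (ha : a ≠ 0) (s : Finset ι) (f : ι → ℤ) :
    a ^ (∑ i ∈ s, f i) = ∏ i ∈ s, a ^ f i := by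
  classical
  induction s using Finset.induction with
  | empty => simp
  | insert _ _ hx ih =>
    rw [Finset.sum_insert hx, Finset.prod_insert hx, zpow_add₀ ha, ih]

lemma closed_of_weights {r n : ℕ} (μ : Fin n → Fin r → ℤ) (v : Fin n → ℂ)
    (hv : ∀ i, v i ≠ 0) (d : Fin n → ℕ) (hd : ∀ i, 0 < d i)
    (hdsum : ∀ j, ∑ i, (d i : ℤ) * μ i j = 0) :
    IsClosed {w : Fin n → ℂ |
        ∃ t : Fin r → ℂˣ, ∀ i, w i = (∏ j, (t j : ℂ) ^ μ i j) * v i} := by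
  classical
  apply IsSeqClosed.isClosed
  intro W w hWmem hlim
  choose t ht using hWmem
  have hphi_ne : ∀ (τ : Fin r → ℂˣ) (i : Fin n), (∏ j, (τ j : ℂ) ^ μ i j) ≠ 0 :=
    fun τ i => Finset.prod_ne_zero_iff.mpr fun j _ => zpow_ne_zero _ (Units.ne_zero _)
  have hWne : ∀ k i, W k i ≠ 0 := fun k i => by
    rw [ht k i]; exact mul_ne_zero (hphi_ne _ i) (hv i)
  -- Step 1 : all coordinates of the limit are nonzero, via the invariant ∏ zᵢ^dᵢ
  set F : (Fin n → ℂ) → ℂ := fun z => ∏ i, z i ^ d i with hF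
  have hFcont : Continuous F := by
    apply continuous_finset_prod
    exact fun i _ => (continuous_apply i).pow _
  have hFW : ∀ k, F (W k) = F v := by
    intro k
    have h1 : F (W k) = (∏ i, (∏ j, ((t k j : ℂ)) ^ μ i j) ^ d i) * F v := by
      simp only [hF]
      rw [← Finset.prod_mul_distrib]
      exact Finset.prod_congr rfl fun i _ => by rw [ht k i, mul_pow]
    have h2 : (∏ i, (∏ j, ((t k j : ℂ)) ^ μ i j) ^ d i) = 1 := by
      have e1 : ∀ i, (∏ j, ((t k j : ℂ)) ^ μ i j) ^ d i
          = ∏ j, ((t k j : ℂ)) ^ (μ i j * (d i : ℤ)) := by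
        intro i
        rw [← Finset.prod_pow]
        exact Finset.prod_congr rfl fun j _ => by
          rw [← zpow_natCast (((t k j : ℂ)) ^ μ i j) (d i), ← zpow_mul]
      rw [Finset.prod_congr rfl fun i _ => e1 i, Finset.prod_comm]
      have e2 : ∀ j, (∏ i, ((t k j : ℂ)) ^ (μ i j * (d i : ℤ))) = 1 := by
        intro j
        rw [← zpow_sum₀' _ (Units.ne_zero (t k j)) Finset.univ (fun i => μ i j * (d i : ℤ))]
        have : ∑ i, μ i j * (d i : ℤ) = 0 := by
          rw [← hdsum j]
          exact Finset.sum_congr rfl fun i _ => by ring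
        rw [this, zpow_zero]
      rw [Finset.prod_congr rfl fun j _ => e2 j, Finset.prod_const_one]
    rw [h1, h2, one_mul]
  have hFv_ne : F v ≠ 0 := Finset.prod_ne_zero_iff.mpr fun i _ => pow_ne_zero _ (hv i)
  have hFw : F w = F v := by
    have h1 : Tendsto (fun k => F (W k)) atTop (nhds (F w)) :=
      (hFcont.tendsto w).comp hlim
    have h2 : Tendsto (fun k => F (W k)) atTop (nhds (F v)) := by
      simp only [hFW]; exact tendsto_const_nhds
    exact tendsto_nhds_unique h1 h2
  have hwne : ∀ i, w i ≠ 0 := by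
    intro i hwi
    apply hFv_ne
    rw [← hFw, hF]
    exact Finset.prod_eq_zero (Finset.mem_univ i) (by rw [hwi]; exact zero_pow (hd i).ne')
  have hwv_ne : ∀ i, w i / v i ≠ 0 := fun i => div_ne_zero (hwne i) (hv i)
  -- Step 2a : the logarithmic part converges in the (closed) column space
  set T : (Fin r → ℝ) →ₗ[ℝ] (Fin n → ℝ) :=
    { toFun := fun a i => ∑ j, (μ i j : ℝ) * a j
      map_add' := by
        intro a b; funext i; simp [mul_add, Finset.sum_add_distrib]
      map_smul' := by
        intro c a; funext i; simp [Finset.mul_sum]; congr 1; funext j; ring } with hT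
  have hTa : ∀ (a : Fin r → ℝ) (i : Fin n), T a i = ∑ j, (μ i j : ℝ) * a j := fun a i => rfl
  set xs : ℕ → Fin n → ℝ := fun k i => Real.log ‖W k i / v i‖ with hxs
  set x : Fin n → ℝ := fun i => Real.log ‖w i / v i‖ with hx
  have hWk_div : ∀ k i, W k i / v i = ∏ j, ((t k j : ℂ)) ^ μ i j := by
    intro k i
    rw [ht k i, mul_div_assoc, div_self (hv i), mul_one]
  have hxs_mem : ∀ k, xs k ∈ LinearMap.range T := by
    intro k
    refine ⟨fun j => Real.log ‖((t k j : ℂ))‖, ?_⟩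
    funext i
    rw [hTa, hxs]
    simp only
    rw [hWk_div k i, norm_prod]
    rw [Real.log_prod (fun j _ => by
      rw [norm_zpow]
      exact zpow_ne_zero _ (norm_ne_zero_iff.mpr (Units.ne_zero _)))]
    exact (Finset.sum_congr rfl fun j _ => by rw [norm_zpow, Real.log_zpow]).symm
  have hxtend : Tendsto xs atTop (nhds x) := by
    rw [tendsto_pi_nhds]
    intro i
    have h2 : Tendsto (fun k => W k i / v i) atTop (nhds (w i / v i)) :=
      (tendsto_pi_nhds.mp hlim i).div_const _
    exact (Real.continuousAt_log (norm_ne_zero_iff.mpr (hwv_ne i))).tendsto.comp h2.norm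
  obtain ⟨y, hy⟩ : x ∈ LinearMap.range T :=
    (Submodule.closed_of_finiteDimensional (LinearMap.range T)).mem_of_tendsto
      hxtend (Filter.Eventually.of_forall hxs_mem)
  -- Step 2b : the unitary part converges in a compact set
  set ψ : (Fin r → ℂ) → Fin n → ℂ := fun z i =>
    ∏ j, (if 0 ≤ μ i j then z j ^ (μ i j).toNat
      else ((starRingEnd ℂ) (z j)) ^ (-(μ i j)).toNat) with hψ
  have hψcont : Continuous ψ := by
    apply continuous_pi
    intro i
    apply continuous_finset_prod
    intro j _
    split_ifs with hij
    · exact (continuous_apply j).pow _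
    · exact ((continuous_star.comp (continuous_apply j))).pow _
  set C : Set (Fin r → ℂ) := Set.univ.pi (fun _ => Metric.sphere (0 : ℂ) 1) with hC
  have hCcomp : IsCompact C := isCompact_univ_pi fun _ => isCompact_sphere 0 1
  have hKclosed : IsClosed (ψ '' C) := (hCcomp.image hψcont).isClosed
  have hCnorm : ∀ z ∈ C, ∀ j, ‖z j‖ = 1 := by
    intro z hz j
    have := hz j (Set.mem_univ j)
    rwa [mem_sphere_zero_iff_norm] at this
  have hψ_eq : ∀ z ∈ C, ∀ i, ψ z i = ∏ j, (z j) ^ μ i j := by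
    intro z hz i
    refine Finset.prod_congr rfl fun j _ => ?_
    have hnorm := hCnorm z hz j
    have hzj_ne : z j ≠ 0 := by
      intro h; rw [h] at hnorm; simp at hnorm
    by_cases hij : 0 ≤ μ i j
    · rw [if_pos hij, ← zpow_natCast, Int.toNat_of_nonneg hij]
    · rw [if_neg hij]
      have h1 : z j * (starRingEnd ℂ) (z j) = 1 := by
        rw [Complex.mul_conj]; norm_cast
        simp [Complex.normSq_eq_norm_sq, hnorm]
      have h2 : (starRingEnd ℂ) (z j) = (z j)⁻¹ := eq_inv_of_mul_eq_one_right h1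
      rw [h2, inv_pow, ← zpow_natCast, ← zpow_neg]
      congr 1
      rw [Int.toNat_of_nonneg (by omega : (0:ℤ) ≤ -(μ i j))]
      ring
  set us : ℕ → Fin n → ℂ := fun k i =>
    (W k i / v i) * ((‖W k i / v i‖ : ℝ) : ℂ)⁻¹ with hus
  set u : Fin n → ℂ := fun i => (w i / v i) * ((‖w i / v i‖ : ℝ) : ℂ)⁻¹ with hu
  have hus_mem : ∀ k, us k ∈ ψ '' C := by
    intro k
    set z : Fin r → ℂ := fun j => (t k j : ℂ) / ((‖(t k j : ℂ)‖ : ℝ) : ℂ) with hz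
    have hzC : z ∈ C := by
      intro j _
      rw [mem_sphere_zero_iff_norm, hz]
      simp only
      rw [norm_div, Complex.norm_real, Real.norm_eq_abs,
        abs_of_nonneg (norm_nonneg _), div_self (norm_ne_zero_iff.mpr (Units.ne_zero _))]
    refine ⟨z, hzC, ?_⟩
    funext i
    rw [hψ_eq z hzC i, hus]
    simp only
    have e1 : ∀ j, (z j) ^ μ i j
        = ((t k j : ℂ)) ^ μ i j / (((‖(t k j : ℂ)‖ : ℝ) : ℂ)) ^ μ i j := by
      intro j; rw [hz]; exact div_zpow _ _ _
    rw [Finset.prod_congr rfl fun j _ => e1 j, Finset.prod_div_distrib]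
    have e2 : (∏ j, (((‖(t k j : ℂ)‖ : ℝ) : ℂ)) ^ μ i j)
        = ((‖W k i / v i‖ : ℝ) : ℂ) := by
      rw [hWk_div k i, norm_prod]
      push_cast
      exact Finset.prod_congr rfl fun j _ => by
        rw [norm_zpow, Complex.ofReal_zpow]
    rw [e2, hWk_div k i, div_eq_mul_inv]
  have hutend : Tendsto us atTop (nhds u) := by
    rw [tendsto_pi_nhds]
    intro i
    have h2 : Tendsto (fun k => W k i / v i) atTop (nhds (w i / v i)) :=
      (tendsto_pi_nhds.mp hlim i).div_const _
    have h3 : Tendsto (fun k => ((‖W k i / v i‖ : ℝ) : ℂ)) atTop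
        (nhds ((‖w i / v i‖ : ℝ) : ℂ)) :=
      (Complex.continuous_ofReal.tendsto _).comp h2.norm
    exact h2.mul (h3.inv₀ (Complex.ofReal_ne_zero.mpr
      (norm_ne_zero_iff.mpr (hwv_ne i))))
  obtain ⟨z, hzC, hzu⟩ : u ∈ ψ '' C :=
    hKclosed.mem_of_tendsto hutend (Filter.Eventually.of_forall hus_mem)
  -- Step 3 : assemble the limit group element
  have hzne : ∀ j, z j ≠ 0 := by
    intro j h
    have := hCnorm z hzC j
    rw [h] at this; simp at this
  refine ⟨fun j => Units.mk0 ((Real.exp (y j) : ℂ) * z j)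
    (mul_ne_zero (by exact_mod_cast Complex.ofReal_ne_zero.mpr (Real.exp_ne_zero _))
      (hzne j)), ?_⟩
  intro i
  have key : (∏ j, (((Real.exp (y j) : ℂ)) * z j) ^ μ i j) = w i / v i := by
    have e1 : ∀ j, (((Real.exp (y j) : ℂ)) * z j) ^ μ i j
        = ((Real.exp (y j) : ℂ)) ^ μ i j * (z j) ^ μ i j := fun j => mul_zpow _ _ _
    rw [Finset.prod_congr rfl fun j _ => e1 j, Finset.prod_mul_distrib]
    have e2 : (∏ j, ((Real.exp (y j) : ℂ)) ^ μ i j) = ((‖w i / v i‖ : ℝ) : ℂ) := by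
      have e21 : ∀ j, ((Real.exp (y j) : ℂ)) ^ μ i j
          = Complex.exp ((μ i j : ℂ) * (y j : ℂ)) := by
        intro j
        rw [Complex.ofReal_exp, Complex.exp_int_mul]
      rw [Finset.prod_congr rfl fun j _ => e21 j, ← Complex.exp_sum]
      have e22 : (∑ j, (μ i j : ℂ) * (y j : ℂ)) = ((x i : ℝ) : ℂ) := by
        rw [← hy, hTa]
        push_cast
        rfl
      rw [e22, hx]
      simp only
      rw [← Complex.ofReal_exp, Real.exp_log (norm_pos_iff.mpr (hwv_ne i))]
    have e3 : (∏ j, (z j) ^ μ i j) = u i := by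
      rw [← hψ_eq z hzC i, hzu]
    rw [e2, e3, hu]
    simp only
    have hne : ((‖w i / v i‖ : ℝ) : ℂ) ≠ 0 :=
      Complex.ofReal_ne_zero.mpr (norm_ne_zero_iff.mpr (hwv_ne i))
    rw [mul_comm, mul_assoc, inv_mul_cancel₀ hne, mul_one]
  simp only [Units.val_mk0]
  rw [key, div_mul_cancel₀ _ (hv i)]

/-- Let the torus `T = (ℂˣ)^r` act diagonally on `V = ℂ^n`, the `i`-th
coordinate line being a weight space of weight `μ i : Fin r → ℤ`, and let
`v = (v 1, …, v n)` be a sum of nonzero weight vectors.  Then the orbit `T ⬝ v`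
is closed in `V` if and only if `0` lies in the relative interior of the convex
hull of `{μ 1, …, μ n}`, i.e. `0` is a convex combination of the weights with
all coefficients strictly positive. -/
theorem torus_orbit_closed_iff_zero_mem_relint {r n : ℕ} (hn : 0 < n)
    (μ : Fin n → Fin r → ℤ) (v : Fin n → ℂ) (hv : ∀ i, v i ≠ 0) :
    IsClosed {w : Fin n → ℂ |
        ∃ t : Fin r → ℂˣ, ∀ i, w i = (∏ j, (t j : ℂ) ^ μ i j) * v i} ↔
      ∃ c : Fin n → ℚ, (∀ i, 0 < c i) ∧ ∑ i, c i = 1 ∧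
        ∀ j, ∑ i, c i * (μ i j : ℚ) = 0 := by
  constructor
  · intro hS
    by_contra hc
    obtain ⟨a, ha, i0, hi0⟩ := stiemke_aux hn μ hc
    exact not_closed_of_destab μ v hv a ha i0 hi0 hS
  · rintro ⟨c, hc, hcsum, hcrel⟩
    obtain ⟨d, hd, hdsum⟩ := nat_weights μ c hc hcrel
    exact closed_of_weights μ v hv d hd hdsum
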